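/- For complex numbers p_1, p_2, p_3, p_4 (pairwise distinct, p_i + p_j ≠ 0) and antisymmetric pfaffian entries given by (i,j) = c_{ij} + ((p_i-p_j)/(p_i+p_j)) φ_i φ_j with c_{14} = c_{23} = 1 and all other c_{ij} = 0 (for i<j), the 4×4 Pfaffian equals Pf(1,2,3,4) = ((p_1-p_2)(p_3-p_4))/((p_1+p_2)(p_3+p_4)) φ_1φ_2φ_3φ_4 - ((p_1-p_3)(p_2-p_4))/((p_1+p_3)(p_2+p_4)) φ_1φ_2φ_3φ_4 + (1 + ((p_1-p_4)/(p_1+p_4))φ_1φ_4)(1 + ((p_2-p_3)/(p_2+p_3))φ_2φ_3), and this equals 1 + e^{γ_1}φ_1φ_4 + e^{γ_2}φ_2φ_3 + b_{12} e^{γ_1+γ_2} φ_1φ_2φ_3φ_4, where e^{γ_1} = (p_1-p_4)/(p_1+p_4), e^{γ_2} = (p_2-p_3)/(p_2+p_3), and b_{12} = ((p_1-p_2)(p_1-p_3)(p_4-p_2)(p_4-p_3))/((p_1+p_2)(p_1+p_3)(p_4+p_2)(p_4+p_3)). -/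

import Mathlib

/-- The Pfaffian of a `2n × 2n` matrix, defined by the sum over permutations. -/
noncomputable def pf {n : ℕ} (A : Matrix (Fin (2 * n)) (Fin (2 * n)) ℂ) : ℂ :=
  (1 / ((2 : ℂ) ^ n * (Nat.factorial n : ℂ))) *
    ∑ σ : Equiv.Perm (Fin (2 * n)),
      ((Equiv.Perm.sign σ : ℤ) : ℂ) *
        ∏ i : Fin n,
          A (σ ⟨2 * (i : ℕ), by have := i.2; omega⟩)
            (σ ⟨2 * (i : ℕ) + 1, by have := i.2; omega⟩)

lemma sum_perm_succ {n : ℕ} (f : Equiv.Perm (Fin (n+1)) → ℂ) :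
    ∑ σ : Equiv.Perm (Fin (n+1)), f σ =
      ∑ i : Fin (n+1), ∑ σ : Equiv.Perm (Fin n), f (Equiv.Perm.decomposeFin.symm (i, σ)) := by
  rw [← Equiv.sum_comp (Equiv.Perm.decomposeFin.symm), Fintype.sum_prod_type]

lemma sum_perm_zero (f : Equiv.Perm (Fin 0) → ℂ) :
    ∑ σ : Equiv.Perm (Fin 0), f σ = f 1 := by
  rw [Fintype.sum_eq_single 1]
  intro x hx
  exact absurd (Subsingleton.elim x 1) hx

lemma mk0 (h : 2 * ((0:Fin 2):ℕ) < 2*2) : (⟨2 * ((0:Fin 2):ℕ), h⟩ : Fin (2*2)) = 0 := rfl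
lemma mk1 (h : 2 * ((0:Fin 2):ℕ) + 1 < 2*2) : (⟨2 * ((0:Fin 2):ℕ) + 1, h⟩ : Fin (2*2)) = Fin.succ 0 := rfl
lemma mk2 (h : 2 * ((1:Fin 2):ℕ) < 2*2) : (⟨2 * ((1:Fin 2):ℕ), h⟩ : Fin (2*2)) = Fin.succ (Fin.succ 0) := rfl
lemma mk3 (h : 2 * ((1:Fin 2):ℕ) + 1 < 2*2) : (⟨2 * ((1:Fin 2):ℕ) + 1, h⟩ : Fin (2*2)) = Fin.succ (Fin.succ (Fin.succ 0)) := rfl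

lemma pf_four (A : Matrix (Fin (2*2)) (Fin (2*2)) ℂ)
    (hskew : ∀ i j, A j i = - A i j) :
    pf A = A 0 1 * A 2 3 - A 0 2 * A 1 3 + A 0 3 * A 1 2 := by
  unfold pf
  simp only [Fin.prod_univ_two, show (2*2) = 3+1 from rfl, sum_perm_succ, sum_perm_zero]
  simp only [Equiv.Perm.decomposeFin.symm_sign, Fin.sum_univ_succ, Fin.sum_univ_zero,
    mk0, mk1, mk2, mk3]
  simp (config := { decide := true }) only [Equiv.Perm.decomposeFin_symm_apply_zero,
    Equiv.Perm.decomposeFin_symm_apply_succ, Equiv.swap_apply_def, Equiv.Perm.sign_one,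
    Equiv.Perm.coe_one, id_eq, if_true, if_false]
  simp only [Fin.succ_zero_eq_one, Fin.succ_one_eq_two, show Fin.succ (2:Fin 3) = (3:Fin 4) by decide,
    show Fin.succ (1:Fin 3) = (2:Fin 4) by decide, show Fin.succ (0:Fin 3) = (1:Fin 4) by decide]
  simp only [hskew 0 1, hskew 0 2, hskew 0 3, hskew 1 2, hskew 1 3, hskew 2 3]
  push_cast
  norm_num
  ring

set_option maxHeartbeats 2000000 in
/-- The two-soliton tau-function structure: the `4×4` Pfaffian with entries
`(i,j) = c_{ij} + ((p_i-p_j)/(p_i+p_j)) φ_i φ_j`, `c_{14} = c_{23} = 1` and all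
other `c_{ij} = 0`, equals
`(1,2)(3,4) - (1,3)(2,4) + (1,4)(2,3)`, i.e.
`1 + e^{γ₁} φ₁φ₄ + e^{γ₂} φ₂φ₃ + b₁₂ e^{γ₁+γ₂} φ₁φ₂φ₃φ₄`. -/
theorem stmt19 (p φ : Fin (2 * 2) → ℂ)
    (hdist : ∀ i j, i ≠ j → p i ≠ p j)
    (hsum : ∀ i j, i ≠ j → p i + p j ≠ 0)
    (hφ : ∀ i, φ i ≠ 0)
    (c : Fin (2 * 2) → Fin (2 * 2) → ℂ)
    (hc : ∀ i j, c i j =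
      if (i = 0 ∧ j = 3) ∨ (i = 1 ∧ j = 2) then 1 else 0)
    (A : Matrix (Fin (2 * 2)) (Fin (2 * 2)) ℂ)
    (hA : ∀ i j, A i j =
      if i < j then c i j + ((p i - p j) / (p i + p j)) * φ i * φ j
      else if j < i then -(c j i + ((p j - p i) / (p j + p i)) * φ j * φ i)
      else 0) :
    pf A = ((p 0 - p 1) * (p 2 - p 3)) / ((p 0 + p 1) * (p 2 + p 3))
            * (φ 0 * φ 1 * φ 2 * φ 3)
          - ((p 0 - p 2) * (p 1 - p 3)) / ((p 0 + p 2) * (p 1 + p 3))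
            * (φ 0 * φ 1 * φ 2 * φ 3)
          + (1 + ((p 0 - p 3) / (p 0 + p 3)) * φ 0 * φ 3)
            * (1 + ((p 1 - p 2) / (p 1 + p 2)) * φ 1 * φ 2)
    ∧ pf A = 1 + ((p 0 - p 3) / (p 0 + p 3)) * (φ 0 * φ 3)
          + ((p 1 - p 2) / (p 1 + p 2)) * (φ 1 * φ 2)
          + (((p 0 - p 1) * (p 0 - p 2) * (p 3 - p 1) * (p 3 - p 2))
              / ((p 0 + p 1) * (p 0 + p 2) * (p 3 + p 1) * (p 3 + p 2)))
            * (((p 0 - p 3) / (p 0 + p 3)) * ((p 1 - p 2) / (p 1 + p 2)))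
            * (φ 0 * φ 1 * φ 2 * φ 3) := by
  have hskew : ∀ i j, A j i = - A i j := by
    intro i j
    rw [hA j i, hA i j]
    rcases lt_trichotomy i j with h | h | h
    · rw [if_neg (asymm h), if_pos h, if_pos h]
    · subst h; simp
    · rw [if_pos h, if_neg (asymm h), if_pos h, neg_neg]
  have e01 : A 0 1 = ((p 0 - p 1) / (p 0 + p 1)) * φ 0 * φ 1 := by
    rw [hA, hc]; simp (config := { decide := true })
  have e02 : A 0 2 = ((p 0 - p 2) / (p 0 + p 2)) * φ 0 * φ 2 := by
    rw [hA, hc]; simp (config := { decide := true })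
  have e03 : A 0 3 = 1 + ((p 0 - p 3) / (p 0 + p 3)) * φ 0 * φ 3 := by
    rw [hA, hc]; simp (config := { decide := true })
  have e12 : A 1 2 = 1 + ((p 1 - p 2) / (p 1 + p 2)) * φ 1 * φ 2 := by
    rw [hA, hc]; simp (config := { decide := true })
  have e13 : A 1 3 = ((p 1 - p 3) / (p 1 + p 3)) * φ 1 * φ 3 := by
    rw [hA, hc]; simp (config := { decide := true })
  have e23 : A 2 3 = ((p 2 - p 3) / (p 2 + p 3)) * φ 2 * φ 3 := by
    rw [hA, hc]; simp (config := { decide := true })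
  have h01 := hsum 0 1 (by decide)
  have h02 := hsum 0 2 (by decide)
  have h03 := hsum 0 3 (by decide)
  have h12 := hsum 1 2 (by decide)
  have h13 := hsum 1 3 (by decide)
  have h23 := hsum 2 3 (by decide)
  have h31 := hsum 3 1 (by decide)
  have h32 := hsum 3 2 (by decide)
  have key : ((p 0 - p 1) / (p 0 + p 1)) * ((p 2 - p 3) / (p 2 + p 3))
      - ((p 0 - p 2) / (p 0 + p 2)) * ((p 1 - p 3) / (p 1 + p 3))
      + ((p 0 - p 3) / (p 0 + p 3)) * ((p 1 - p 2) / (p 1 + p 2))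
      = (((p 0 - p 1) * (p 0 - p 2) * (p 3 - p 1) * (p 3 - p 2))
          / ((p 0 + p 1) * (p 0 + p 2) * (p 3 + p 1) * (p 3 + p 2)))
        * (((p 0 - p 3) / (p 0 + p 3)) * ((p 1 - p 2) / (p 1 + p 2))) := by
    rw [show p 3 + p 1 = p 1 + p 3 by ring, show p 3 + p 2 = p 2 + p 3 by ring]
    simp only [div_mul_div_comm]
    field_simp
    have hD : (p 0 + p 1) * (p 0 + p 2) * (p 1 + p 3) * (p 2 + p 3) * ((p 0 + p 3) * (p 1 + p 2)) ≠ 0 :=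
      mul_ne_zero (mul_ne_zero (mul_ne_zero (mul_ne_zero h01 h02) h13) h23) (mul_ne_zero h03 h12)
    ring
  rw [pf_four A hskew, e01, e02, e03, e12, e13, e23]
  have m1 : ((p 0 - p 1) * (p 2 - p 3)) / ((p 0 + p 1) * (p 2 + p 3))
      = ((p 0 - p 1) / (p 0 + p 1)) * ((p 2 - p 3) / (p 2 + p 3)) := (div_mul_div_comm _ _ _ _).symm
  have m2 : ((p 0 - p 2) * (p 1 - p 3)) / ((p 0 + p 2) * (p 1 + p 3))
      = ((p 0 - p 2) / (p 0 + p 2)) * ((p 1 - p 3) / (p 1 + p 3)) := (div_mul_div_comm _ _ _ _).symm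
  constructor
  · rw [m1, m2]; ring
  · linear_combination (φ 0 * φ 1 * φ 2 * φ 3) * key
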